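/- arXiv:1606.04533 — 4 statements merged into one kernel-verified Lean document; each statement's English description precedes it below -/
import Mathlib

section
/- Let ψ be an arithmetic function with positive constants A, B, C such that 0 ≤ ψ(n) < C·n for all n, ∑_{n≤x} ψ(n) ~ A·x²/2 and ∑_{n≤x} ψ(n)² ~ B·x³/3 as x → ∞. If A² < B, then ψ does not have a normal order; i.e., there is no increasing function f : ℕ → ℝ with f(n) ≥ 0 such that for every ε > 0, #{n ≤ x : |ψ(n) − f(n)| ≥ ε·f(n)} = o(x). -/
open Filter Asymptotics

/-- `ψ` has normal order `f`: `f` is increasing and nonnegative, and for every `ε > 0`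
the number of `n ≤ x` with `|ψ n - f n| ≥ ε * f n` is `o(x)`. -/
def HasNormalOrder (ψ f : ℕ → ℝ) : Prop :=
  Monotone f ∧ (∀ n, 0 ≤ f n) ∧ ∀ ε : ℝ, 0 < ε →
    (fun x : ℕ => (((Finset.Icc 1 x).filter fun n => ε * f n ≤ |ψ n - f n|).card : ℝ))
      =o[atTop] fun x : ℕ => (x : ℝ)


lemma aux_equiv_tendsto (g : ℕ → ℝ) (c : ℝ) (p : ℕ) (hc : c ≠ 0)
    (h : g ~[atTop] fun x : ℕ => c * (x:ℝ)^p) :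
    Tendsto (fun x : ℕ => g x / (x:ℝ)^p) atTop (nhds c) := by
  have hv : ∀ᶠ x : ℕ in atTop, c * (x:ℝ)^p ≠ 0 := by
    filter_upwards [eventually_ge_atTop 1] with x hx
    have hx0 : (x:ℝ) ≠ 0 := Nat.cast_ne_zero.mpr (by omega)
    exact mul_ne_zero hc (pow_ne_zero _ hx0)
  have h1 := (isEquivalent_iff_tendsto_one hv).mp h
  have h2 : Tendsto (fun x : ℕ => g x / (c * (x:ℝ)^p) * c) atTop (nhds (1 * c)) :=
    h1.mul_const c
  rw [one_mul] at h2
  refine h2.congr' ?_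
  filter_upwards [eventually_ge_atTop 1] with x hx
  have hx0 : (x:ℝ) ≠ 0 := Nat.cast_ne_zero.mpr (by omega)
  field_simp

lemma aux_comp (g : ℕ → ℝ) (c : ℝ) (p : ℕ) (K : ℕ) (hK : 1 ≤ K)
    (h : Tendsto (fun x : ℕ => g x / (x:ℝ)^p) atTop (nhds c)) :
    Tendsto (fun x : ℕ => g (K * x) / (x:ℝ)^p) atTop (nhds (c * (K:ℝ)^p)) := by
  have hKx : Tendsto (fun x : ℕ => K * x) atTop atTop :=
    tendsto_atTop_mono (fun x => Nat.le_mul_of_pos_left x hK) tendsto_id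
  have h1 : Tendsto (fun x : ℕ => g (K * x) / ((K * x : ℕ):ℝ)^p) atTop (nhds c) :=
    h.comp hKx
  have h2 := h1.mul_const ((K:ℝ)^p)
  refine h2.congr' ?_
  filter_upwards [eventually_ge_atTop 1] with x hx
  have hx0 : (x:ℝ) ≠ 0 := Nat.cast_ne_zero.mpr (by omega)
  have hK0 : (K:ℝ) ≠ 0 := Nat.cast_ne_zero.mpr (by omega)
  push_cast
  rw [mul_pow]
  field_simp


lemma sum_split (g : ℕ → ℝ) (a b : ℕ) (hab : a ≤ b) :
    ∑ n ∈ Finset.Icc 1 b, g n = ∑ n ∈ Finset.Icc 1 a, g n + ∑ n ∈ Finset.Icc (a+1) b, g n := by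
  rw [show Finset.Icc 1 b = Finset.Ioc 0 b from Finset.Icc_add_one_left_eq_Ioc 0 b,
      show Finset.Icc 1 a = Finset.Ioc 0 a from Finset.Icc_add_one_left_eq_Ioc 0 a,
      show Finset.Icc (a+1) b = Finset.Ioc a b from Finset.Icc_add_one_left_eq_Ioc a b]
  exact (Finset.sum_Ioc_consecutive g (Nat.zero_le a) hab).symm

lemma interval_lower (ψ f : ℕ → ℝ) (ε : ℝ) (hε1 : ε < 1)
    (hmono : Monotone f) (hfnn : ∀ n, 0 ≤ f n) (hψ0 : ∀ n, 1 ≤ n → 0 ≤ ψ n)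
    (a b : ℕ) (hab : a ≤ b) :
    (1 - ε) * (((b - a : ℕ) : ℝ)
        - (((Finset.Icc 1 b).filter fun n => ε * f n ≤ |ψ n - f n|).card : ℝ)) * f a
      ≤ ∑ n ∈ Finset.Icc 1 b, ψ n - ∑ n ∈ Finset.Icc 1 a, ψ n := by
  have hsplit := sum_split ψ a b hab
  set I := Finset.Icc (a+1) b with hI
  set Bd := I.filter (fun n => ε * f n ≤ |ψ n - f n|) with hBd
  set G := I.filter (fun n => ¬ (ε * f n ≤ |ψ n - f n|)) with hG
  have hcard : Bd.card + G.card = b - a := by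
    rw [hBd, hG, Finset.card_filter_add_card_filter_not, hI, Nat.card_Icc]
    omega
  have hIsub : I ⊆ Finset.Icc 1 b := by
    rw [hI]; exact Finset.Icc_subset_Icc (by omega) le_rfl
  have hBdE : (Bd.card : ℝ) ≤
      (((Finset.Icc 1 b).filter fun n => ε * f n ≤ |ψ n - f n|).card : ℝ) :=
    Nat.cast_le.mpr (Finset.card_le_card (Finset.filter_subset_filter _ hIsub))
  have hGle : ∀ n ∈ G, (1 - ε) * f a ≤ ψ n := by
    intro n hn
    obtain ⟨hnI, hnp⟩ := Finset.mem_filter.mp hn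
    push_neg at hnp
    have habs := (abs_lt.mp hnp).1
    have hmem := Finset.mem_Icc.mp hnI
    have hmon : f a ≤ f n := hmono (by omega)
    have hfn : 0 ≤ f n := hfnn n
    nlinarith [mul_le_mul_of_nonneg_left hmon (by linarith : (0:ℝ) ≤ 1 - ε)]
  have hsum2 : (G.card : ℝ) * ((1 - ε) * f a) ≤ ∑ n ∈ G, ψ n := by
    calc (G.card : ℝ) * ((1 - ε) * f a) = ∑ _n ∈ G, ((1 - ε) * f a) := by
          rw [Finset.sum_const, nsmul_eq_mul]
      _ ≤ ∑ n ∈ G, ψ n := Finset.sum_le_sum hGle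
  have hsub : ∑ n ∈ G, ψ n ≤ ∑ n ∈ I, ψ n := by
    refine Finset.sum_le_sum_of_subset_of_nonneg (Finset.filter_subset _ _) ?_
    intro n hnI _
    have := Finset.mem_Icc.mp hnI
    exact hψ0 n (by omega)
  have hGc : (G.card : ℝ) = ((b - a : ℕ) : ℝ) - (Bd.card : ℝ) := by
    have : (Bd.card : ℝ) + (G.card : ℝ) = ((b - a : ℕ) : ℝ) := by exact_mod_cast hcard
    linarith
  have hfa : 0 ≤ f a := hfnn a
  have h9 : 0 ≤ (1 - ε) * ((((Finset.Icc 1 b).filter fun n => ε * f n ≤ |ψ n - f n|).card : ℝ)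
      - (Bd.card : ℝ)) * f a :=
    mul_nonneg (mul_nonneg (by linarith) (by linarith)) hfa
  have hsum2' : (((b - a : ℕ) : ℝ) - (Bd.card : ℝ)) * ((1 - ε) * f a) ≤ ∑ n ∈ G, ψ n := by
    rw [← hGc]; exact hsum2
  nlinarith [hsum2', hsub, hsplit, h9]

lemma interval_upper (ψ f : ℕ → ℝ) (ε C : ℝ) (hε : 0 < ε) (hC : 0 < C)
    (hmono : Monotone f) (hfnn : ∀ n, 0 ≤ f n)
    (hψ : ∀ n : ℕ, 1 ≤ n → 0 ≤ ψ n ∧ ψ n < C * n)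
    (a b : ℕ) (hab : a ≤ b) :
    ∑ n ∈ Finset.Icc 1 b, ψ n ^ 2 - ∑ n ∈ Finset.Icc 1 a, ψ n ^ 2
      ≤ (1 + ε) * f b * (∑ n ∈ Finset.Icc 1 b, ψ n - ∑ n ∈ Finset.Icc 1 a, ψ n)
        + C ^ 2 * (b : ℝ) ^ 2
          * (((Finset.Icc 1 b).filter fun n => ε * f n ≤ |ψ n - f n|).card : ℝ) := by
  have hsplit1 := sum_split ψ a b hab
  have hsplit2 := sum_split (fun n => ψ n ^ 2) a b hab
  set I := Finset.Icc (a+1) b with hI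
  set Bd := I.filter (fun n => ε * f n ≤ |ψ n - f n|) with hBd
  set G := I.filter (fun n => ¬ (ε * f n ≤ |ψ n - f n|)) with hG
  have hIsub : I ⊆ Finset.Icc 1 b := by
    rw [hI]; exact Finset.Icc_subset_Icc (by omega) le_rfl
  have hBdE : (Bd.card : ℝ) ≤
      (((Finset.Icc 1 b).filter fun n => ε * f n ≤ |ψ n - f n|).card : ℝ) :=
    Nat.cast_le.mpr (Finset.card_le_card (Finset.filter_subset_filter _ hIsub))
  have hGood : ∀ n ∈ G, ψ n ^ 2 ≤ (1 + ε) * f b * ψ n := by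
    intro n hn
    obtain ⟨hnI, hnp⟩ := Finset.mem_filter.mp hn
    push_neg at hnp
    have habs := (abs_lt.mp hnp).2
    have hmem := Finset.mem_Icc.mp hnI
    have hψn := hψ n (by omega)
    have h5 : ψ n ≤ (1 + ε) * f n := by linarith
    have h7 : f n ≤ f b := hmono (by omega)
    have hfn : 0 ≤ f n := hfnn n
    nlinarith [mul_le_mul_of_nonneg_left h5 hψn.1, mul_le_mul_of_nonneg_left h7
      (mul_nonneg (by linarith : (0:ℝ) ≤ 1 + ε) hψn.1)]
  have hBad : ∀ n ∈ Bd, ψ n ^ 2 ≤ C ^ 2 * (b : ℝ) ^ 2 := by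
    intro n hn
    obtain ⟨hnI, _⟩ := Finset.mem_filter.mp hn
    have hmem := Finset.mem_Icc.mp hnI
    have hψn := hψ n (by omega)
    have hnb : (n : ℝ) ≤ (b : ℝ) := by exact_mod_cast hmem.2
    have h8 : ψ n ≤ C * (b : ℝ) := by nlinarith [hψn.2]
    nlinarith [mul_self_le_mul_self hψn.1 h8]
  have hGsum : ∑ n ∈ G, ψ n ^ 2 ≤ (1 + ε) * f b * ∑ n ∈ G, ψ n := by
    rw [Finset.mul_sum]
    exact Finset.sum_le_sum hGood
  have hGsub : ∑ n ∈ G, ψ n ≤ ∑ n ∈ I, ψ n := by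
    refine Finset.sum_le_sum_of_subset_of_nonneg (Finset.filter_subset _ _) ?_
    intro n hnI _
    have := Finset.mem_Icc.mp hnI
    exact (hψ n (by omega)).1
  have hBsum : ∑ n ∈ Bd, ψ n ^ 2 ≤ (Bd.card : ℝ) * (C ^ 2 * (b : ℝ) ^ 2) := by
    calc ∑ n ∈ Bd, ψ n ^ 2 ≤ ∑ _n ∈ Bd, (C ^ 2 * (b : ℝ) ^ 2) := Finset.sum_le_sum hBad
      _ = (Bd.card : ℝ) * (C ^ 2 * (b : ℝ) ^ 2) := by rw [Finset.sum_const, nsmul_eq_mul]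
  have hsplitI : ∑ n ∈ Bd, ψ n ^ 2 + ∑ n ∈ G, ψ n ^ 2 = ∑ n ∈ I, ψ n ^ 2 :=
    Finset.sum_filter_add_sum_filter_not I _ _
  have hfb : 0 ≤ f b := hfnn b
  have hCb : (0:ℝ) ≤ C ^ 2 * (b : ℝ) ^ 2 := by positivity
  have h10 : (1 + ε) * f b * (∑ n ∈ Finset.Icc 1 b, ψ n - ∑ n ∈ Finset.Icc 1 a, ψ n)
      = (1 + ε) * f b * ∑ n ∈ I, ψ n := by rw [hsplit1]; ring
  nlinarith [mul_le_mul_of_nonneg_left hGsub (mul_nonneg (by linarith : (0:ℝ) ≤ 1 + ε) hfb),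
    mul_le_mul_of_nonneg_right hBdE hCb, hGsum, hBsum, hsplitI, hsplit2, h10]


lemma final_ineq (A B C ε k : ℝ) (hA : 0 < A) (hB : 0 < B) (hε : 0 < ε) (hε1 : ε < 1)
    (hd : 0 < B * (1 - ε) - A ^ 2 * (1 + ε)) (hk : 2 ≤ k)
    (hKd : 12 * A ^ 2 * (1 + ε) < (B * (1 - ε) - A ^ 2 * (1 + ε)) * k) :
    (A / 2 * (k + 1) ^ 2 - A / 2 * k ^ 2) / ((1 - ε) * (1 - 0))
      < (B / 3 * k ^ 3 - B / 3 * (k - 1) ^ 3 - C ^ 2 * k ^ 2 * 0)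
        / ((1 + ε) * (A / 2 * k ^ 2 - A / 2 * (k - 1) ^ 2)) := by
  have hden1 : (0:ℝ) < (1 - ε) * (1 - 0) := by nlinarith
  have hden2' : (0:ℝ) < A / 2 * k ^ 2 - A / 2 * (k - 1) ^ 2 := by nlinarith
  have hden2 : (0:ℝ) < (1 + ε) * (A / 2 * k ^ 2 - A / 2 * (k - 1) ^ 2) :=
    mul_pos (by linarith) hden2'

  rw [div_lt_div_iff₀ hden1 hden2]
  nlinarith [mul_nonneg hd.le (show (0:ℝ) ≤ 11 * k ^ 2 - 12 * k + 4 by nlinarith),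
    mul_lt_mul_of_pos_right hKd (show (0:ℝ) < k by linarith),
    mul_nonneg (mul_nonneg (sq_nonneg A) (show (0:ℝ) ≤ 1 + ε by linarith))
      (show (0:ℝ) ≤ 7 by norm_num)]

theorem no_normal_order_of_moments (ψ : ℕ → ℝ) (A B C : ℝ)
    (hA : 0 < A) (hB : 0 < B) (hC : 0 < C)
    (hψ : ∀ n : ℕ, 1 ≤ n → 0 ≤ ψ n ∧ ψ n < C * n)
    (h1 : (fun x : ℕ => ∑ n ∈ Finset.Icc 1 x, ψ n) ~[atTop]
      fun x : ℕ => A * (x : ℝ) ^ 2 / 2)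
    (h2 : (fun x : ℕ => ∑ n ∈ Finset.Icc 1 x, (ψ n) ^ 2) ~[atTop]
      fun x : ℕ => B * (x : ℝ) ^ 3 / 3)
    (hAB : A ^ 2 < B) :
    ¬ ∃ f : ℕ → ℝ, HasNormalOrder ψ f := by
  rintro ⟨f, hmono, hfnn, hno⟩
  -- choice of ε
  obtain ⟨ε, hε, hε1, hd⟩ : ∃ ε : ℝ, 0 < ε ∧ ε < 1 ∧
      0 < B * (1 - ε) - A ^ 2 * (1 + ε) := by
    refine ⟨(B - A ^ 2) / (4 * B), div_pos (by linarith) (by linarith), ?_, ?_⟩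
    · rw [div_lt_one (by linarith)]
      nlinarith [sq_nonneg A]
    · have h4 : B * (1 - (B - A ^ 2) / (4 * B)) - A ^ 2 * (1 + (B - A ^ 2) / (4 * B))
          = ((3 * B - A ^ 2) * (B - A ^ 2)) / (4 * B) := by
        field_simp; ring
      rw [h4]
      exact div_pos (mul_pos (by nlinarith [sq_nonneg A]) (by linarith)) (by linarith)
  -- choice of K
  obtain ⟨K, hK2, hKd⟩ : ∃ K : ℕ, 2 ≤ K ∧
      12 * A ^ 2 * (1 + ε) < (B * (1 - ε) - A ^ 2 * (1 + ε)) * (K : ℝ) := by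
    refine ⟨max 2 (⌈(12 * A ^ 2 * (1 + ε)) / (B * (1 - ε) - A ^ 2 * (1 + ε))⌉₊ + 1),
      le_max_left _ _, ?_⟩
    have hle := Nat.le_ceil ((12 * A ^ 2 * (1 + ε)) / (B * (1 - ε) - A ^ 2 * (1 + ε)))
    have hlt : (⌈(12 * A ^ 2 * (1 + ε)) / (B * (1 - ε) - A ^ 2 * (1 + ε))⌉₊ : ℝ)
        < ((max 2 (⌈(12 * A ^ 2 * (1 + ε)) / (B * (1 - ε) - A ^ 2 * (1 + ε))⌉₊ + 1) : ℕ) : ℝ) := by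
      have h5 : ⌈(12 * A ^ 2 * (1 + ε)) / (B * (1 - ε) - A ^ 2 * (1 + ε))⌉₊ + 1
          ≤ max 2 (⌈(12 * A ^ 2 * (1 + ε)) / (B * (1 - ε) - A ^ 2 * (1 + ε))⌉₊ + 1) :=
        le_max_right _ _
      exact_mod_cast by omega
    have h0 := lt_of_le_of_lt hle hlt
    rw [div_lt_iff₀ hd] at h0
    linarith [h0]
  have hKR : (2 : ℝ) ≤ (K : ℝ) := by exact_mod_cast hK2
  set K1 : ℕ := K - 1 with hK1def
  have hK1c : (K1 : ℝ) = (K : ℝ) - 1 := by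
    rw [hK1def, Nat.cast_sub (by omega)]; norm_num
  have hK11 : 1 ≤ K1 := by omega
  clear_value K1
  -- the arithmetic functions
  set S : ℕ → ℝ := fun x => ∑ n ∈ Finset.Icc 1 x, ψ n with hSdef
  set T : ℕ → ℝ := fun x => ∑ n ∈ Finset.Icc 1 x, (ψ n) ^ 2 with hTdef
  have hlo := hno ε hε
  set E : ℕ → ℝ :=
    fun x : ℕ => (((Finset.Icc 1 x).filter fun n => ε * f n ≤ |ψ n - f n|).card : ℝ)
    with hEdef
  -- facts needing the definitions
  have hEnn : ∀ n : ℕ, (0 : ℝ) ≤ E n := by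
    intro n; rw [hEdef]; exact Nat.cast_nonneg _
  have hE0 : Tendsto (fun x : ℕ => E x / (x : ℝ)) atTop (nhds 0) := by
    rw [← Asymptotics.isLittleO_iff_tendsto']
    · exact hlo
    · filter_upwards [eventually_ge_atTop 1] with x hx h0
      exact absurd (Nat.cast_eq_zero.mp h0) (by omega)
  have hSt : Tendsto (fun x : ℕ => S x / (x : ℝ) ^ 2) atTop (nhds (A / 2)) := by
    rw [hSdef]
    apply aux_equiv_tendsto _ (A / 2) 2 (by positivity)
    have heq : (fun x : ℕ => A * (x : ℝ) ^ 2 / 2) = fun x : ℕ => (A / 2) * (x : ℝ) ^ 2 := by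
      funext x; ring
    rw [← heq]
    exact h1
  have hTt : Tendsto (fun x : ℕ => T x / (x : ℝ) ^ 3) atTop (nhds (B / 3)) := by
    rw [hTdef]
    apply aux_equiv_tendsto _ (B / 3) 3 (by positivity)
    have heq : (fun x : ℕ => B * (x : ℝ) ^ 3 / 3) = fun x : ℕ => (B / 3) * (x : ℝ) ^ 3 := by
      funext x; ring
    rw [← heq]
    exact h2
  -- key pointwise inequalities
  have key1 : ∀ x : ℕ, 1 ≤ x →
      (1 - ε) * ((x : ℝ) - E ((K + 1) * x)) * f (K * x) ≤ S ((K + 1) * x) - S (K * x) := by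
    intro x hx
    have h := interval_lower ψ f ε hε1 hmono hfnn (fun n hn => (hψ n hn).1)
      (K * x) ((K + 1) * x) (Nat.mul_le_mul (Nat.le_succ K) le_rfl)
    have hba : (K + 1) * x - K * x = x := by rw [add_mul, one_mul]; omega
    rw [hba] at h
    rw [hSdef, hEdef]
    exact h
  have key2 : ∀ x : ℕ, 1 ≤ x →
      T (K * x) - T (K1 * x)
        ≤ (1 + ε) * f (K * x) * (S (K * x) - S (K1 * x))
          + C ^ 2 * ((K : ℝ) * (x : ℝ)) ^ 2 * E (K * x) := by
    intro x hx
    have h := interval_upper ψ f ε C hε hC hmono hfnn hψ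
      (K1 * x) (K * x) (Nat.mul_le_mul (by omega) le_rfl)
    push_cast at h
    rw [hSdef, hTdef, hEdef]
    exact h
  clear_value S T E
  clear hlo hSdef hTdef hEdef h1 h2 hno
  -- scaled limits
  have hE0' : Tendsto (fun x : ℕ => E x / (x : ℝ) ^ 1) atTop (nhds 0) := by
    simpa using hE0
  have hS_K1x : Tendsto (fun x : ℕ => S (K1 * x) / (x : ℝ) ^ 2) atTop
      (nhds (A / 2 * (K1 : ℝ) ^ 2)) := aux_comp S (A / 2) 2 K1 (by omega) hSt
  have hS_Kx : Tendsto (fun x : ℕ => S (K * x) / (x : ℝ) ^ 2) atTop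
      (nhds (A / 2 * (K : ℝ) ^ 2)) := aux_comp S (A / 2) 2 K (by omega) hSt
  have hS_K2x : Tendsto (fun x : ℕ => S ((K + 1) * x) / (x : ℝ) ^ 2) atTop
      (nhds (A / 2 * ((K : ℝ) + 1) ^ 2)) := by
    have h := aux_comp S (A / 2) 2 (K + 1) (by omega) hSt
    have hc : ((K + 1 : ℕ) : ℝ) = (K : ℝ) + 1 := by push_cast; ring
    rwa [hc] at h
  have hT_K1x : Tendsto (fun x : ℕ => T (K1 * x) / (x : ℝ) ^ 3) atTop
      (nhds (B / 3 * (K1 : ℝ) ^ 3)) := aux_comp T (B / 3) 3 K1 (by omega) hTt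
  have hT_Kx : Tendsto (fun x : ℕ => T (K * x) / (x : ℝ) ^ 3) atTop
      (nhds (B / 3 * (K : ℝ) ^ 3)) := aux_comp T (B / 3) 3 K (by omega) hTt
  have hE_Kx : Tendsto (fun x : ℕ => E (K * x) / (x : ℝ)) atTop (nhds 0) := by
    have h := aux_comp E 0 1 K (by omega) hE0'
    simpa using h
  have hE_K2x : Tendsto (fun x : ℕ => E ((K + 1) * x) / (x : ℝ)) atTop (nhds 0) := by
    have h := aux_comp E 0 1 (K + 1) (by omega) hE0'
    simpa using h
  -- difference limits
  have hD1 : Tendsto (fun x : ℕ => (S ((K + 1) * x) - S (K * x)) / (x : ℝ) ^ 2) atTop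
      (nhds (A / 2 * ((K : ℝ) + 1) ^ 2 - A / 2 * (K : ℝ) ^ 2)) := by
    have h := hS_K2x.sub hS_Kx
    refine h.congr fun x => ?_
    rw [sub_div]
  have hD2 : Tendsto (fun x : ℕ => (S (K * x) - S (K1 * x)) / (x : ℝ) ^ 2) atTop
      (nhds (A / 2 * (K : ℝ) ^ 2 - A / 2 * (K1 : ℝ) ^ 2)) := by
    have h := hS_Kx.sub hS_K1x
    refine h.congr fun x => ?_
    rw [sub_div]
  have hD3 : Tendsto (fun x : ℕ => (T (K * x) - T (K1 * x)) / (x : ℝ) ^ 3) atTop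
      (nhds (B / 3 * (K : ℝ) ^ 3 - B / 3 * (K1 : ℝ) ^ 3)) := by
    have h := hT_Kx.sub hT_K1x
    refine h.congr fun x => ?_
    rw [sub_div]
  -- positivity of the second-moment interval coefficient
  have hL2pos : 0 < A / 2 * (K : ℝ) ^ 2 - A / 2 * (K1 : ℝ) ^ 2 := by
    rw [hK1c]; nlinarith
  -- eventual bounds
  have ev1 : ∀ᶠ x : ℕ in atTop, E ((K + 1) * x) / (x : ℝ) < 1 / 2 :=
    hE_K2x.eventually_lt_const (by norm_num)
  have ev2 : ∀ᶠ x : ℕ in atTop,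
      (A / 2 * (K : ℝ) ^ 2 - A / 2 * (K1 : ℝ) ^ 2) / 2
        < (S (K * x) - S (K1 * x)) / (x : ℝ) ^ 2 :=
    hD2.eventually_const_lt (half_lt_self hL2pos)
  -- the eventual comparison
  have hcomp : ∀ᶠ x : ℕ in atTop,
      ((T (K * x) - T (K1 * x)) / (x : ℝ) ^ 3
          - C ^ 2 * (K : ℝ) ^ 2 * (E (K * x) / (x : ℝ)))
        / ((1 + ε) * ((S (K * x) - S (K1 * x)) / (x : ℝ) ^ 2))
      ≤ ((S ((K + 1) * x) - S (K * x)) / (x : ℝ) ^ 2)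
        / ((1 - ε) * (1 - E ((K + 1) * x) / (x : ℝ))) := by
    filter_upwards [eventually_ge_atTop 1, ev1, ev2] with x hx h1x h2x
    have hxR : (1 : ℝ) ≤ (x : ℝ) := by exact_mod_cast hx
    have hxpos : (0 : ℝ) < (x : ℝ) := by linarith
    have hxne : (x : ℝ) ≠ 0 := ne_of_gt hxpos
    have hxE : 0 < (x : ℝ) - E ((K + 1) * x) := by
      rw [div_lt_iff₀ hxpos] at h1x; linarith
    have hD2p : 0 < S (K * x) - S (K1 * x) := by
      have h0 : 0 < (S (K * x) - S (K1 * x)) / (x : ℝ) ^ 2 :=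
        lt_trans (half_pos hL2pos) h2x
      have h0' := mul_pos h0 (pow_pos hxpos 2)
      rwa [div_mul_cancel₀ _ (by positivity : ((x : ℝ) ^ 2) ≠ 0)] at h0'
    have hεp : (0:ℝ) < 1 + ε := by linarith
    have hεm : (0:ℝ) < 1 - ε := by linarith
    have hk1 := key1 x hx
    have hk2 := key2 x hx
    have e1 : ((T (K * x) - T (K1 * x)) / (x : ℝ) ^ 3
          - C ^ 2 * (K : ℝ) ^ 2 * (E (K * x) / (x : ℝ)))
        / ((1 + ε) * ((S (K * x) - S (K1 * x)) / (x : ℝ) ^ 2))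
        = (T (K * x) - T (K1 * x) - C ^ 2 * (K : ℝ) ^ 2 * (x : ℝ) ^ 2 * E (K * x))
          / ((1 + ε) * (S (K * x) - S (K1 * x)) * (x : ℝ)) := by
      rw [div_eq_div_iff (mul_pos hεp (lt_trans (half_pos hL2pos) h2x)).ne'
        (mul_pos (mul_pos hεp hD2p) hxpos).ne']
      field_simp
    have e2 : ((S ((K + 1) * x) - S (K * x)) / (x : ℝ) ^ 2)
        / ((1 - ε) * (1 - E ((K + 1) * x) / (x : ℝ)))
        = (S ((K + 1) * x) - S (K * x))
          / ((1 - ε) * ((x : ℝ) - E ((K + 1) * x)) * (x : ℝ)) := by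
      have hq : 0 < 1 - E ((K + 1) * x) / (x : ℝ) := by
        rw [sub_pos, div_lt_one hxpos]; linarith
      rw [div_eq_div_iff (mul_pos hεm hq).ne' (mul_pos (mul_pos hεm hxE) hxpos).ne']
      field_simp
    rw [e1, e2]
    have step1 : (T (K * x) - T (K1 * x)
          - C ^ 2 * (K : ℝ) ^ 2 * (x : ℝ) ^ 2 * E (K * x))
        / ((1 + ε) * (S (K * x) - S (K1 * x)) * (x : ℝ)) ≤ f (K * x) / (x : ℝ) := by
      rw [div_le_div_iff₀ (mul_pos (mul_pos hεp hD2p) hxpos) hxpos]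
      linarith [mul_le_mul_of_nonneg_right hk2 hxpos.le]
    have step2 : f (K * x) / (x : ℝ)
        ≤ (S ((K + 1) * x) - S (K * x))
          / ((1 - ε) * ((x : ℝ) - E ((K + 1) * x)) * (x : ℝ)) := by
      rw [div_le_div_iff₀ hxpos (mul_pos (mul_pos hεm hxE) hxpos)]
      linarith [mul_le_mul_of_nonneg_right hk1 hxpos.le]
    exact step1.trans step2
  -- limits of both sides
  have hLL : Tendsto (fun x : ℕ =>
      ((T (K * x) - T (K1 * x)) / (x : ℝ) ^ 3
          - C ^ 2 * (K : ℝ) ^ 2 * (E (K * x) / (x : ℝ)))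
        / ((1 + ε) * ((S (K * x) - S (K1 * x)) / (x : ℝ) ^ 2))) atTop
      (nhds ((B / 3 * (K : ℝ) ^ 3 - B / 3 * (K1 : ℝ) ^ 3 - C ^ 2 * (K : ℝ) ^ 2 * 0)
        / ((1 + ε) * (A / 2 * (K : ℝ) ^ 2 - A / 2 * (K1 : ℝ) ^ 2)))) :=
    (hD3.sub (tendsto_const_nhds.mul hE_Kx)).div
      (tendsto_const_nhds.mul hD2)
      (ne_of_gt (mul_pos (by linarith) hL2pos))
  have hUU : Tendsto (fun x : ℕ =>
      ((S ((K + 1) * x) - S (K * x)) / (x : ℝ) ^ 2)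
        / ((1 - ε) * (1 - E ((K + 1) * x) / (x : ℝ)))) atTop
      (nhds ((A / 2 * ((K : ℝ) + 1) ^ 2 - A / 2 * (K : ℝ) ^ 2)
        / ((1 - ε) * (1 - 0)))) :=
    hD1.div (tendsto_const_nhds.mul (tendsto_const_nhds.sub hE_K2x))
      (ne_of_gt (mul_pos (by linarith) (by norm_num)))
  have hfinal := le_of_tendsto_of_tendsto hLL hUU hcomp
  rw [hK1c] at hfinal
  exact absurd hfinal (not_le.mpr (final_ineq A B C ε (K : ℝ) hA hB hε hε1 hd hKR hKd))
end

section
/- Euler's totient function φ does not have a normal order; i.e., there is no increasing nonnegative function f such that for every ε > 0 the number of n ≤ x with |φ(n) − f(n)| ≥ ε f(n) is o(x) as x → ∞. -/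
open Filter Asymptotics

section AuxLemmas

open Finset

/-- Count of multiples of `d` in `Ioc a b`. -/
lemma count_dvd_Ioc (d a b : ℕ) (hab : a ≤ b) :
    ((Finset.Ioc a b).filter (fun x => d ∣ x)).card = b / d - a / d := by
  have hsplit : (Finset.Ioc 0 a).filter (fun x => d ∣ x) ∪ (Finset.Ioc a b).filter (fun x => d ∣ x)
      = (Finset.Ioc 0 b).filter (fun x => d ∣ x) := by
    rw [← Finset.filter_union, Finset.Ioc_union_Ioc_eq_Ioc (Nat.zero_le a) hab]
  have hdisj : Disjoint ((Finset.Ioc 0 a).filter (fun x => d ∣ x))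
      ((Finset.Ioc a b).filter (fun x => d ∣ x)) := by
    rw [Finset.disjoint_left]
    intro x hx hy
    simp only [Finset.mem_filter, Finset.mem_Ioc] at hx hy
    omega
  have := Finset.card_union_of_disjoint hdisj
  rw [hsplit, Nat.Ioc_filter_dvd_card_eq_div, Nat.Ioc_filter_dvd_card_eq_div] at this
  omega

/-- Count of multiples of `d` in `range n` when `d ∣ n`. -/
lemma count_dvd_range {d n : ℕ} (hd : 0 < d) (hdn : d ∣ n) :
    ((Finset.range n).filter (fun k => d ∣ k)).card = n / d := by
  obtain ⟨m, rfl⟩ := hdn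
  have himg : (Finset.range (d * m)).filter (fun k => d ∣ k)
      = (Finset.range m).image (fun j => d * j) := by
    ext k
    simp only [Finset.mem_filter, Finset.mem_range, Finset.mem_image]
    constructor
    · rintro ⟨hk, j, rfl⟩
      exact ⟨j, by exact lt_of_mul_lt_mul_left hk (Nat.zero_le d), rfl⟩
    · rintro ⟨j, hj, rfl⟩
      exact ⟨Nat.mul_lt_mul_left hd |>.2 hj, j, rfl⟩
  rw [himg, Finset.card_image_of_injective _ (fun a b h => Nat.eq_of_mul_eq_mul_left hd h),
    Finset.card_range, Nat.mul_div_cancel_left _ hd]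

/-- Elementary lower bound for the totient: the non-coprime residues are covered by
multiples of the prime factors. -/
lemma totient_lower {n : ℕ} (hn : 2 ≤ n) :
    n ≤ n.totient + ∑ p ∈ n.primeFactors, n / p := by
  classical
  have hsub : (Finset.range n).filter (fun k => ¬ n.Coprime k)
      ⊆ n.primeFactors.biUnion (fun p => (Finset.range n).filter (fun k => p ∣ k)) := by
    intro k hk
    simp only [Finset.mem_filter, Finset.mem_range] at hk
    obtain ⟨hkn, hnc⟩ := hk
    have hg : 2 ≤ Nat.gcd n k := by
      rcases Nat.lt_or_ge (Nat.gcd n k) 2 with h | h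
      · interval_cases h' : Nat.gcd n k
        · have := Nat.eq_zero_of_gcd_eq_zero_left h'; omega
        · exact absurd h' hnc
      · exact h
    set p := (Nat.gcd n k).minFac with hp
    have hpp : p.Prime := Nat.minFac_prime (by omega)
    have hpd : p ∣ Nat.gcd n k := Nat.minFac_dvd _
    refine Finset.mem_biUnion.2 ⟨p, ?_, ?_⟩
    · exact Nat.mem_primeFactors.2 ⟨hpp, hpd.trans (Nat.gcd_dvd_left _ _), by omega⟩
    · exact Finset.mem_filter.2 ⟨Finset.mem_range.2 hkn, hpd.trans (Nat.gcd_dvd_right _ _)⟩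
  have hcard : ((Finset.range n).filter (fun k => ¬ n.Coprime k)).card
      ≤ ∑ p ∈ n.primeFactors, n / p := by
    refine (Finset.card_le_card hsub).trans ?_
    refine Finset.card_biUnion_le.trans (Finset.sum_le_sum fun p hp => ?_)
    rw [count_dvd_range (Nat.mem_primeFactors.1 hp).1.pos
      (Nat.mem_primeFactors.1 hp).2.1]
  have htot := Finset.card_filter_add_card_filter_not
    (s := Finset.range n) (p := fun k => n.Coprime k)
  rw [Finset.card_range] at htot
  have : n.totient = ((Finset.range n).filter (fun k => n.Coprime k)).card := rfl
  omega

/-- If `6 ∣ n`, then `φ(n) ≤ n/3`. -/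
lemma totient_le_third {n : ℕ} (h6 : 6 ∣ n) : 3 * n.totient ≤ n := by
  classical
  have h2 : (2:ℕ) ∣ n := dvd_trans ⟨3, rfl⟩ h6
  have h3 : (3:ℕ) ∣ n := dvd_trans ⟨2, rfl⟩ h6
  set A := (Finset.range n).filter (fun k => 2 ∣ k) with hA
  set B := (Finset.range n).filter (fun k => 3 ∣ k) with hB
  have hAB : A ∩ B = (Finset.range n).filter (fun k => 6 ∣ k) := by
    rw [hA, hB, ← Finset.filter_and]
    apply Finset.filter_congr
    intro k _
    constructor
    · rintro ⟨hk2, hk3⟩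
      exact (Nat.Coprime.mul_dvd_of_dvd_of_dvd (by decide) hk2 hk3)
    · intro hk
      exact ⟨dvd_trans ⟨3, rfl⟩ hk, dvd_trans ⟨2, rfl⟩ hk⟩
  have hAcard : A.card = n / 2 := count_dvd_range (by norm_num) h2
  have hBcard : B.card = n / 3 := count_dvd_range (by norm_num) h3
  have hABcard : (A ∩ B).card = n / 6 := by rw [hAB]; exact count_dvd_range (by norm_num) h6
  have hUcard : (A ∪ B).card = n / 2 + n / 3 - n / 6 := by
    have := Finset.card_union_add_card_inter A B
    omega
  have hsub : (Finset.range n).filter (fun k => n.Coprime k) ⊆ Finset.range n \ (A ∪ B) := by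
    intro k hk
    simp only [Finset.mem_filter] at hk
    obtain ⟨hkr, hkc⟩ := hk
    rw [Finset.mem_sdiff, Finset.mem_union, hA, hB]
    refine ⟨hkr, fun hmem => ?_⟩
    rcases hmem with hk2 | hk2 <;>
    · simp only [Finset.mem_filter] at hk2
      have hd := Nat.dvd_gcd (by assumption) hk2.2
      rw [Nat.Coprime] at hkc
      rw [hkc] at hd
      exact absurd (Nat.le_of_dvd one_pos hd) (by norm_num)
  have htot : n.totient ≤ n - (n / 2 + n / 3 - n / 6) := by
    have h1 : n.totient = ((Finset.range n).filter (fun k => n.Coprime k)).card := rfl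
    have h2' := Finset.card_le_card hsub
    rw [Finset.card_sdiff_of_subset
      (Finset.union_subset (Finset.filter_subset _ _) (Finset.filter_subset _ _))] at h2'
    rw [Finset.card_range, hUcard] at h2'
    omega
  omega

/-- Telescoping helper. -/
noncomputable def gtel (j : ℕ) : ℝ := 1/(4*(j:ℝ)) - 1/(4*((j:ℝ)+1))

lemma teleSum (M : ℕ) :
    ∑ j ∈ Finset.Icc 1 M, gtel j = 1/4 - 1/(4*((M:ℝ)+1)) := by
  induction M with
  | zero => simp [gtel]
  | succ M ih =>
    rw [Finset.sum_Icc_succ_top (by omega : 1 ≤ M + 1), ih]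
    unfold gtel
    push_cast
    ring

lemma gtel_nonneg {j : ℕ} (hj : 1 ≤ j) : 0 ≤ gtel j := by
  unfold gtel
  have hjR : (1:ℝ) ≤ (j:ℝ) := by exact_mod_cast hj
  rw [sub_nonneg, div_le_div_iff₀ (by positivity) (by positivity)]
  nlinarith

/-- The sum of `1/d²` over odd `d ≥ 3` is at most `1/4`. -/
lemma sumInvSq (M : ℕ) :
    ∑ d ∈ (Finset.Icc 3 M).filter (fun d => ¬ 2 ∣ d), (1:ℝ)/(d:ℝ)^2 ≤ 1/4 := by
  classical
  set s := (Finset.Icc 3 M).filter (fun d => ¬ 2 ∣ d) with hs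
  have hmem : ∀ d ∈ s, 3 ≤ d ∧ d ≤ M ∧ d % 2 = 1 := by
    intro d hd
    simp only [hs, Finset.mem_filter, Finset.mem_Icc] at hd
    omega
  have hstep : ∀ d ∈ s, (1:ℝ)/(d:ℝ)^2 ≤ gtel (d/2) := by
    intro d hd
    obtain ⟨h3, _, hodd⟩ := hmem d hd
    set j := d / 2 with hj
    have hdj : d = 2*j+1 := by omega
    have hj1 : 1 ≤ j := by omega
    have hjR : (1:ℝ) ≤ (j:ℝ) := by exact_mod_cast hj1
    unfold gtel
    have hd2 : ((d:ℝ))^2 = (2*(j:ℝ)+1)^2 := by rw [hdj]; push_cast; ring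
    rw [hd2, div_sub_div _ _ (by positivity) (by positivity),
      div_le_div_iff₀ (by positivity) (by positivity)]
    nlinarith
  calc ∑ d ∈ s, (1:ℝ)/(d:ℝ)^2
      ≤ ∑ d ∈ s, gtel (d/2) := Finset.sum_le_sum hstep
    _ = ∑ j ∈ s.image (fun d => d/2), gtel j := by
        rw [Finset.sum_image]
        intro a ha b hb hab
        obtain ⟨_, _, _⟩ := hmem a ha
        obtain ⟨_, _, _⟩ := hmem b hb
        simp only at hab
        omega
    _ ≤ ∑ j ∈ Finset.Icc 1 M, gtel j := by
        apply Finset.sum_le_sum_of_subset_of_nonneg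
        · intro j hj
          simp only [Finset.mem_image] at hj
          obtain ⟨d, hd, rfl⟩ := hj
          obtain ⟨_, _, _⟩ := hmem d hd
          simp only [Finset.mem_Icc]
          omega
        · intro j hj _
          simp only [Finset.mem_Icc] at hj
          exact gtel_nonneg hj.1
    _ = 1/4 - 1/(4*((M:ℝ)+1)) := teleSum M
    _ ≤ 1/4 := by
        have : (0:ℝ) ≤ 1/(4*((M:ℝ)+1)) := by positivity
        linarith

/-- The sum of `1/d` over odd `3 ≤ d ≤ M` is at most `t/8 + M/(2t)` for every `t > 0`. -/
lemma sumInv (M : ℕ) (t : ℝ) (ht : 0 < t)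
    (hsq : ∑ d ∈ (Finset.Icc 3 M).filter (fun d => ¬ 2 ∣ d), (1:ℝ)/(d:ℝ)^2 ≤ 1/4) :
    ∑ d ∈ (Finset.Icc 3 M).filter (fun d => ¬ 2 ∣ d), (1:ℝ)/(d:ℝ)
      ≤ t/8 + M/(2*t) := by
  classical
  set s := (Finset.Icc 3 M).filter (fun d => ¬ 2 ∣ d) with hs
  have hcard : (s.card : ℝ) ≤ M := by
    have h1 : s.card ≤ (Finset.Icc 3 M).card := Finset.card_filter_le _ _
    rw [Nat.card_Icc] at h1
    have : s.card ≤ M := by omega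
    exact_mod_cast this
  have hstep : ∀ d ∈ s, (1:ℝ)/(d:ℝ) ≤ (t/(d:ℝ)^2 + 1/t)/2 := by
    intro d hd
    simp only [hs, Finset.mem_filter, Finset.mem_Icc] at hd
    have hd3 : (3:ℝ) ≤ (d:ℝ) := by exact_mod_cast hd.1.1
    have hd0 : (0:ℝ) < (d:ℝ) := by linarith
    rw [← sub_nonneg]
    have hkey : (t/(d:ℝ)^2 + 1/t)/2 - 1/(d:ℝ) = (t-(d:ℝ))^2/(2*t*(d:ℝ)^2) := by
      field_simp
      ring
    rw [hkey]
    positivity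
  have heq : ∑ d ∈ s, (t/(d:ℝ)^2 + 1/t)/2
      = (t * ∑ d ∈ s, (1:ℝ)/(d:ℝ)^2 + s.card * (1/t))/2 := by
    rw [← Finset.sum_div, Finset.sum_add_distrib, Finset.mul_sum, Finset.sum_const, nsmul_eq_mul]
    congr 2
    apply Finset.sum_congr rfl
    intros
    ring
  have h1 : t * ∑ d ∈ s, (1:ℝ)/(d:ℝ)^2 ≤ t/4 := by
    calc t * ∑ d ∈ s, (1:ℝ)/(d:ℝ)^2 ≤ t * (1/4) := mul_le_mul_of_nonneg_left hsq ht.le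
      _ = t/4 := by ring
  have h2 : (s.card:ℝ) * (1/t) ≤ (M:ℝ) * (1/t) := mul_le_mul_of_nonneg_right hcard (by positivity)
  have h3 : (M:ℝ)/(2*t) = ((M:ℝ) * (1/t))/2 := by
    rw [mul_one_div, div_div, mul_comm]
  calc ∑ d ∈ s, (1:ℝ)/(d:ℝ) ≤ ∑ d ∈ s, (t/(d:ℝ)^2 + 1/t)/2 := Finset.sum_le_sum hstep
    _ = (t * ∑ d ∈ s, (1:ℝ)/(d:ℝ)^2 + s.card * (1/t))/2 := heq
    _ ≤ t/8 + M/(2*t) := by rw [h3]; linarith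

end AuxLemmas

set_option maxHeartbeats 2000000 in
theorem totient_no_normal_order :
    ¬ ∃ f : ℕ → ℝ, HasNormalOrder (fun n => (Nat.totient n : ℝ)) f := by
  classical
  rintro ⟨f, hmono, hf0, h⟩
  have ho := h (1/20) (by norm_num)
  have hev := ho.def (show (0:ℝ) < 1/10200 by norm_num)
  obtain ⟨X, hX⟩ := Filter.eventually_atTop.1 hev
  set N : ℕ := max X 100000000 + 1 with hNdef
  have hN8 : 100000000 ≤ N := by
    have := le_max_right X 100000000; omega
  have hNX : X ≤ 102*N := by
    have := le_max_left X 100000000; omega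
  have hN0R : (0:ℝ) < (N:ℝ) := by
    have : (0:ℕ) < N := by omega
    exact_mod_cast this
  set badset := (Finset.Icc 1 (102*N)).filter
      (fun n => 1/20 * f n ≤ |((Nat.totient n : ℝ)) - f n|) with hbaddef
  have hbad : (badset.card : ℝ) ≤ (N:ℝ)/100 := by
    have hb := hX (102*N) hNX
    simp only [Real.norm_eq_abs] at hb
    rw [abs_of_nonneg (by positivity), abs_of_nonneg (by positivity)] at hb
    calc (badset.card : ℝ) ≤ 1/10200 * ((102*N : ℕ) : ℝ) := hb
      _ = (N:ℝ)/100 := by push_cast; ring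
  clear_value N
  have hN8R : (100000000:ℝ) ≤ (N:ℝ) := by exact_mod_cast hN8
  -- a good multiple of 6 in (101N, 102N]
  set sixes := (Finset.Ioc (101*N) (102*N)).filter (fun n => 6 ∣ n) with hsixdef
  have hsixcard : sixes.card = 102*N/6 - 101*N/6 := count_dvd_Ioc 6 _ _ (by omega)
  have hsixcardR : (N:ℝ)/6 - 1 ≤ (sixes.card : ℝ) := by
    have h1 : N ≤ 6 * sixes.card + 6 := by omega
    have : (N:ℝ) ≤ 6*(sixes.card:ℝ) + 6 := by exact_mod_cast h1
    linarith
  have hsixsub : sixes ⊆ (sixes.filter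
      (fun n => |((Nat.totient n : ℝ)) - f n| < 1/20 * f n)) ∪ badset := by
    intro n hn
    by_cases hg : |((Nat.totient n : ℝ)) - f n| < 1/20 * f n
    · exact Finset.mem_union_left _ (Finset.mem_filter.2 ⟨hn, hg⟩)
    · refine Finset.mem_union_right _ ?_
      simp only [hsixdef, Finset.mem_filter, Finset.mem_Ioc] at hn
      refine Finset.mem_filter.2 ⟨Finset.mem_Icc.2 (by omega), by linarith [not_lt.1 hg]⟩
  have hgoodsix : (sixes.filter
      (fun n => |((Nat.totient n : ℝ)) - f n| < 1/20 * f n)).Nonempty := by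
    rw [Finset.nonempty_iff_ne_empty]
    intro hempty
    have hle : sixes.card ≤ badset.card := by
      have := (Finset.card_le_card hsixsub).trans (Finset.card_union_le _ _)
      rw [hempty] at this
      simpa using this
    have hleR : (sixes.card:ℝ) ≤ (badset.card:ℝ) := by exact_mod_cast hle
    linarith
  obtain ⟨n₂, hn₂⟩ := hgoodsix
  -- odd numbers in (100N, 101N]
  set odds := (Finset.Ioc (100*N) (101*N)).filter (fun n => ¬ 2 ∣ n) with hodddef
  have hoddcard : N ≤ 2 * odds.card := by
    have hsplit : ((Finset.Ioc (100*N) (101*N)).filter (fun n => 2 ∣ n)).card + odds.card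
        = (Finset.Ioc (100*N) (101*N)).card := by
      rw [hodddef]
      exact Finset.card_filter_add_card_filter_not (p := fun n => 2 ∣ n)
    rw [count_dvd_Ioc 2 _ _ (by omega), Nat.card_Ioc] at hsplit
    omega
  have hoddR : (N:ℝ)/2 ≤ (odds.card : ℝ) := by
    have : (N:ℝ) ≤ 2*(odds.card:ℝ) := by exact_mod_cast hoddcard
    linarith
  set Bset := odds.filter (fun n => ((Nat.totient n : ℝ) < 2/5 * n)) with hBdef
  set D := (Finset.Icc 3 (101*N)).filter (fun d => ¬ 2 ∣ d) with hDdef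
  -- every element of Bset has a large sum of prime reciprocals
  have hfrac : ∀ n ∈ Bset, (3/5:ℝ) ≤ ∑ p ∈ n.primeFactors, (1:ℝ)/p := by
    intro n hn
    simp only [hBdef, hodddef, Finset.mem_filter, Finset.mem_Ioc] at hn
    obtain ⟨⟨⟨hn1, hn2⟩, hodd⟩, hsmall⟩ := hn
    have h2n : 2 ≤ n := by omega
    have hnR : (0:ℝ) < (n:ℝ) := by
      have : (0:ℕ) < n := by omega
      exact_mod_cast this
    have hlow := totient_lower h2n
    have hlowR : (n:ℝ) ≤ (Nat.totient n : ℝ) + ∑ p ∈ n.primeFactors, ((n/p : ℕ) : ℝ) := by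
      exact_mod_cast hlow
    have hcast : ∑ p ∈ n.primeFactors, ((n/p : ℕ) : ℝ) ≤ ∑ p ∈ n.primeFactors, (n:ℝ)/p :=
      Finset.sum_le_sum (fun p _ => Nat.cast_div_le)
    have hmulsum : ∑ p ∈ n.primeFactors, (n:ℝ)/p = (n:ℝ) * ∑ p ∈ n.primeFactors, (1:ℝ)/p := by
      rw [Finset.mul_sum]
      apply Finset.sum_congr rfl
      intros
      ring
    have hkey : (3/5:ℝ) * n ≤ (n:ℝ) * ∑ p ∈ n.primeFactors, (1:ℝ)/p := by
      rw [← hmulsum]; linarith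
    have := (mul_le_mul_iff_right₀ hnR).1 (by linarith [hkey] : (n:ℝ) * (3/5) ≤
      (n:ℝ) * ∑ p ∈ n.primeFactors, (1:ℝ)/p)
    linarith
  have hB1 : (3/5:ℝ) * Bset.card ≤ ∑ n ∈ Bset, ∑ p ∈ n.primeFactors, (1:ℝ)/p := by
    have := Finset.card_nsmul_le_sum Bset (fun n => ∑ p ∈ n.primeFactors, (1:ℝ)/p) (3/5) hfrac
    rw [nsmul_eq_mul] at this
    linarith [this]
  have hB2 : ∑ n ∈ Bset, ∑ p ∈ n.primeFactors, (1:ℝ)/p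
      ≤ ∑ d ∈ D, (1/(d:ℝ)) * ((Bset.filter (fun n => d ∣ n)).card : ℝ) := by
    have hstep : ∀ n ∈ Bset, ∑ p ∈ n.primeFactors, (1:ℝ)/p
        ≤ ∑ d ∈ D, (if d ∣ n then (1:ℝ)/(d:ℝ) else 0) := by
      intro n hn
      simp only [hBdef, hodddef, Finset.mem_filter, Finset.mem_Ioc] at hn
      obtain ⟨⟨⟨hn1, hn2⟩, hodd⟩, _⟩ := hn
      have hsubpf : n.primeFactors ⊆ D := by
        intro p hp
        obtain ⟨hpp, hpdvd, hpne⟩ := Nat.mem_primeFactors.1 hp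
        have hp2 : ¬ 2 ∣ p := fun hd => hodd (hd.trans hpdvd)
        have hp3 : 3 ≤ p := by
          have := hpp.two_le
          rcases Nat.lt_or_ge p 3 with h | h
          · interval_cases p
            · exact absurd ⟨1, rfl⟩ hp2
          · exact h
        have hple : p ≤ 101*N := le_trans (Nat.le_of_dvd (by omega) hpdvd) hn2
        simp only [hDdef, Finset.mem_filter, Finset.mem_Icc]
        exact ⟨⟨hp3, hple⟩, hp2⟩
      calc ∑ p ∈ n.primeFactors, (1:ℝ)/p
          = ∑ p ∈ n.primeFactors, (if p ∣ n then (1:ℝ)/(p:ℝ) else 0) := by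
            apply Finset.sum_congr rfl
            intro p hp
            rw [if_pos (Nat.mem_primeFactors.1 hp).2.1]
        _ ≤ ∑ d ∈ D, (if d ∣ n then (1:ℝ)/(d:ℝ) else 0) := by
            apply Finset.sum_le_sum_of_subset_of_nonneg hsubpf
            intro d _ _
            split
            · positivity
            · exact le_rfl
    calc ∑ n ∈ Bset, ∑ p ∈ n.primeFactors, (1:ℝ)/p
        ≤ ∑ n ∈ Bset, ∑ d ∈ D, (if d ∣ n then (1:ℝ)/(d:ℝ) else 0) := Finset.sum_le_sum hstep
      _ = ∑ d ∈ D, ∑ n ∈ Bset, (if d ∣ n then (1:ℝ)/(d:ℝ) else 0) := Finset.sum_comm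
      _ = ∑ d ∈ D, (1/(d:ℝ)) * ((Bset.filter (fun n => d ∣ n)).card : ℝ) := by
          apply Finset.sum_congr rfl
          intro d _
          rw [← Finset.sum_filter, Finset.sum_const, nsmul_eq_mul, mul_comm]
  have hB3 : ∑ d ∈ D, (1/(d:ℝ)) * ((Bset.filter (fun n => d ∣ n)).card : ℝ)
      ≤ ∑ d ∈ D, (1/(d:ℝ)) * ((N:ℝ)/(d:ℝ) + 1) := by
    apply Finset.sum_le_sum
    intro d hd
    simp only [hDdef, Finset.mem_filter, Finset.mem_Icc] at hd
    have hd3 : 3 ≤ d := hd.1.1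
    have hd0 : (0:ℝ) < (d:ℝ) := by
      have : (0:ℕ) < d := by omega
      exact_mod_cast this
    have hsubB : Bset.filter (fun n => d ∣ n)
        ⊆ (Finset.Ioc (100*N) (101*N)).filter (fun x => d ∣ x) := by
      intro x hx
      simp only [hBdef, hodddef, Finset.mem_filter, Finset.mem_Ioc] at hx ⊢
      exact ⟨hx.1.1.1, hx.2⟩
    have hcardle : (Bset.filter (fun n => d ∣ n)).card ≤ 101*N/d - 100*N/d := by
      rw [← count_dvd_Ioc d (100*N) (101*N) (by omega)]
      exact Finset.card_le_card hsubB
    have hdivle : (100*N)/d ≤ (101*N)/d := Nat.div_le_div_right (by omega)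
    have hcastR : ((101*N/d - 100*N/d : ℕ) : ℝ) ≤ (N:ℝ)/(d:ℝ) + 1 := by
      rw [Nat.cast_sub hdivle]
      have hu : ((101*N/d : ℕ):ℝ) ≤ ((101*N : ℕ):ℝ)/(d:ℝ) := Nat.cast_div_le
      have hmod := Nat.div_add_mod (100*N) d
      have hmlt : (100*N) % d < d := Nat.mod_lt _ (by omega)
      have hmodR : (d:ℝ) * ((100*N/d : ℕ):ℝ) + (((100*N) % d : ℕ):ℝ) = ((100*N : ℕ):ℝ) := by
        exact_mod_cast hmod
      have hmltR : (((100*N) % d : ℕ):ℝ) < (d:ℝ) := by exact_mod_cast hmlt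
      have hl : ((100*N : ℕ):ℝ)/(d:ℝ) - 1 ≤ ((100*N/d : ℕ):ℝ) := by
        rw [sub_le_iff_le_add, div_le_iff₀ hd0]
        nlinarith
      have hsplit : ((101*N : ℕ):ℝ)/(d:ℝ) = ((100*N : ℕ):ℝ)/(d:ℝ) + (N:ℝ)/(d:ℝ) := by
        rw [← add_div]
        push_cast
        ring_nf
      linarith
    have hcc : ((Bset.filter (fun n => d ∣ n)).card : ℝ) ≤ (N:ℝ)/(d:ℝ) + 1 := by
      calc ((Bset.filter (fun n => d ∣ n)).card : ℝ)
          ≤ ((101*N/d - 100*N/d : ℕ) : ℝ) := by exact_mod_cast hcardle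
        _ ≤ (N:ℝ)/(d:ℝ) + 1 := hcastR
    have : (0:ℝ) ≤ 1/(d:ℝ) := by positivity
    exact mul_le_mul_of_nonneg_left hcc this
  have hB4 : ∑ d ∈ D, (1/(d:ℝ)) * ((N:ℝ)/(d:ℝ) + 1)
      = (N:ℝ) * (∑ d ∈ D, (1:ℝ)/(d:ℝ)^2) + ∑ d ∈ D, (1:ℝ)/(d:ℝ) := by
    rw [Finset.mul_sum, ← Finset.sum_add_distrib]
    apply Finset.sum_congr rfl
    intros
    ring
  have hB5 : ∑ d ∈ D, (1:ℝ)/(d:ℝ)^2 ≤ 1/4 := sumInvSq (101*N)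
  have hB6 : ∑ d ∈ D, (1:ℝ)/(d:ℝ) ≤ (N:ℝ)/100 := by
    set t := Real.sqrt (N:ℝ) with htdef
    have ht0 : 0 < t := Real.sqrt_pos.2 hN0R
    have hts : t^2 = (N:ℝ) := Real.sq_sqrt hN0R.le
    have ht4 : (10000:ℝ) ≤ t := by
      have h1 : (10000:ℝ) = Real.sqrt (10000^2) := (Real.sqrt_sq (by norm_num)).symm
      rw [h1, htdef]
      apply Real.sqrt_le_sqrt
      norm_num
      linarith
    have hsumle := sumInv (101*N) t ht0 hB5
    have h101 : ((101*N : ℕ):ℝ) = 101 * t^2 := by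
      push_cast
      rw [hts]
    have heq2 : t/8 + ((101*N:ℕ):ℝ)/(2*t) = (405/8)*t := by
      rw [h101]
      field_simp
      ring
    have hfin : (405/8)*t ≤ (N:ℝ)/100 := by
      nlinarith [mul_le_mul_of_nonneg_left ht4 ht0.le]
    calc ∑ d ∈ D, (1:ℝ)/(d:ℝ) ≤ t/8 + ((101*N:ℕ):ℝ)/(2*t) := hsumle
      _ = (405/8)*t := heq2
      _ ≤ (N:ℝ)/100 := hfin
  have hBcard : (Bset.card:ℝ) ≤ 13*(N:ℝ)/30 := by
    have hchain : (3/5:ℝ) * Bset.card ≤ (N:ℝ)*(1/4) + (N:ℝ)/100 := by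
      calc (3/5:ℝ) * Bset.card ≤ ∑ n ∈ Bset, ∑ p ∈ n.primeFactors, (1:ℝ)/p := hB1
        _ ≤ ∑ d ∈ D, (1/(d:ℝ)) * ((Bset.filter (fun n => d ∣ n)).card : ℝ) := hB2
        _ ≤ ∑ d ∈ D, (1/(d:ℝ)) * ((N:ℝ)/(d:ℝ) + 1) := hB3
        _ = (N:ℝ) * (∑ d ∈ D, (1:ℝ)/(d:ℝ)^2) + ∑ d ∈ D, (1:ℝ)/(d:ℝ) := hB4
        _ ≤ (N:ℝ)*(1/4) + (N:ℝ)/100 := by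
            have := mul_le_mul_of_nonneg_left hB5 hN0R.le
            linarith
    linarith
  -- a good odd number with large totient in (100N, 101N]
  set goodbig := odds.filter (fun n => (2/5:ℝ)*n ≤ (Nat.totient n:ℝ)
      ∧ |((Nat.totient n:ℝ)) - f n| < 1/20 * f n) with hgooddef
  have hoddsub : odds ⊆ Bset ∪ goodbig ∪ badset := by
    intro n hn
    by_cases hsmall : ((Nat.totient n : ℝ) < 2/5 * n)
    · exact Finset.mem_union_left _ (Finset.mem_union_left _ (Finset.mem_filter.2 ⟨hn, hsmall⟩))
    · by_cases hg : |((Nat.totient n : ℝ)) - f n| < 1/20 * f n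
      · exact Finset.mem_union_left _ (Finset.mem_union_right _
          (Finset.mem_filter.2 ⟨hn, not_lt.1 hsmall, hg⟩))
      · refine Finset.mem_union_right _ ?_
        simp only [hodddef, Finset.mem_filter, Finset.mem_Ioc] at hn
        refine Finset.mem_filter.2 ⟨Finset.mem_Icc.2 (by omega), by linarith [not_lt.1 hg]⟩
  have hgoodbig : goodbig.Nonempty := by
    rw [Finset.nonempty_iff_ne_empty]
    intro hempty
    have hle : odds.card ≤ Bset.card + badset.card := by
      have h1 := (Finset.card_le_card hoddsub).trans (Finset.card_union_le _ _)
      have h2 := Finset.card_union_le Bset goodbig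
      have h3 : goodbig.card = 0 := by rw [hempty]; rfl
      omega
    have hleR : (odds.card:ℝ) ≤ (Bset.card:ℝ) + (badset.card:ℝ) := by exact_mod_cast hle
    linarith
  obtain ⟨n₁, hn₁⟩ := hgoodbig
  -- final contradiction
  simp only [hgooddef, hodddef, Finset.mem_filter, Finset.mem_Ioc] at hn₁
  obtain ⟨⟨⟨hn₁l, hn₁u⟩, hodd₁⟩, hbig₁, hgood₁⟩ := hn₁
  simp only [hsixdef, Finset.mem_filter, Finset.mem_Ioc] at hn₂
  obtain ⟨⟨⟨hn₂l, hn₂u⟩, hsix₂⟩, hgood₂⟩ := hn₂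
  have hmono12 : f n₁ ≤ f n₂ := hmono (by omega : n₁ ≤ n₂)
  have hφ₂ := totient_le_third hsix₂
  have hφ₂R : 3*((Nat.totient n₂ : ℕ):ℝ) ≤ ((n₂:ℕ):ℝ) := by exact_mod_cast hφ₂
  have hn₂R : ((n₂:ℕ):ℝ) ≤ 102*(N:ℝ) := by
    have : (n₂:ℕ) ≤ 102*N := hn₂u
    exact_mod_cast this
  have hn₁R : 100*(N:ℝ) < ((n₁:ℕ):ℝ) := by
    have : 100*N < (n₁:ℕ) := hn₁l
    exact_mod_cast this
  have habs₁ := abs_lt.1 hgood₁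
  have habs₂ := abs_lt.1 hgood₂
  linarith [habs₁.2, habs₂.1, hbig₁, hmono12, hφ₂R, hn₂R, hn₁R, hN0R]
end

section
/- The divisor function d(n) does not have a normal order; i.e., there is no increasing nonnegative function f such that for every ε > 0, the number of n ≤ x with |d(n) − f(n)| ≥ ε f(n) is o(x) as x → ∞. -/
open Filter Asymptotics

lemma d_two_pow_mul (k m : ℕ) (hm : Odd m) :
    ((2 ^ k * m).divisors.card : ℕ) = (k + 1) * m.divisors.card := by
  have h2 : ¬ (2 ∣ m) := by
    rcases hm with ⟨r, hr⟩; omega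
  have hco : Nat.Coprime (2 ^ k) m :=
    Nat.Coprime.pow_left _ ((Nat.Prime.coprime_iff_not_dvd Nat.prime_two).mpr h2)
  rw [Nat.Coprime.card_divisors_mul hco, Nat.divisors_prime_pow Nat.prime_two,
    Finset.card_map, Finset.card_range]

theorem divisor_no_normal_order :
    ¬ ∃ f : ℕ → ℝ, HasNormalOrder (fun n => (n.divisors.card : ℝ)) f := by
  rintro ⟨f, hmono, hpos, h⟩
  have h10 := (h (1/10) (by norm_num)).def (by norm_num : (0:ℝ) < 1/300000)
  rw [Filter.eventually_atTop] at h10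
  obtain ⟨N, hN⟩ := h10
  set t : ℕ := N + 1 with ht
  set X : ℕ := 98304 * t with hX
  set B : Finset ℕ := (Finset.Icc 1 X).filter
      (fun n => (1/10 : ℝ) * f n ≤ |((n.divisors.card : ℝ)) - f n|) with hBdef
  have hBcard : (B.card : ℝ) ≤ (1/300000) * X := by
    have h' := hN X (by omega)
    rw [Real.norm_eq_abs, Real.norm_eq_abs, abs_of_nonneg (Nat.cast_nonneg _),
      abs_of_nonneg (Nat.cast_nonneg _)] at h'
    exact h'
  have hgood : ∀ n, 1 ≤ n → n ≤ X → n ∉ B →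
      |((n.divisors.card : ℝ)) - f n| < (1/10) * f n := by
    intro n h1 h2 hn
    by_contra hcon
    push_neg at hcon
    exact hn (Finset.mem_filter.mpr ⟨Finset.mem_Icc.mpr ⟨h1, h2⟩, hcon⟩)
  have hcount : ∀ (a b : ℕ) (g : ℕ → ℕ), (∀ j1 j2 : ℕ, g j1 = g j2 → j1 = j2) →
      ((Finset.Ico a b).filter (fun j => g j ∈ B)).card ≤ B.card := by
    intro a b g hinj
    apply Finset.card_le_card_of_injOn g
    · intro j hj
      exact (Finset.mem_filter.mp hj).2
    · intro j1 _ j2 _ hq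
      exact hinj _ _ hq
  -- find a good element in Ico a b avoiding two bad conditions
  have hfind : ∀ (a b : ℕ) (g1 g2 : ℕ → ℕ), (∀ j1 j2 : ℕ, g1 j1 = g1 j2 → j1 = j2) →
      (∀ j1 j2 : ℕ, g2 j1 = g2 j2 → j1 = j2) →
      ((2 : ℝ) * B.card < ((b - a : ℕ) : ℝ)) →
      ∃ j, a ≤ j ∧ j < b ∧ g1 j ∉ B ∧ g2 j ∉ B := by
    intro a b g1 g2 hi1 hi2 hlt
    set bad := (Finset.Ico a b).filter (fun j => g1 j ∈ B ∨ g2 j ∈ B) with hbad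
    have hb1 : bad.card < (Finset.Ico a b).card := by
      have h1 : bad.card ≤
          ((Finset.Ico a b).filter (fun j => g1 j ∈ B)).card +
          ((Finset.Ico a b).filter (fun j => g2 j ∈ B)).card := by
        rw [hbad, Finset.filter_or]
        exact Finset.card_union_le _ _
      have h2 := hcount a b g1 hi1
      have h3 := hcount a b g2 hi2
      have : (bad.card : ℝ) < ((b - a : ℕ) : ℝ) := by
        have : (bad.card : ℝ) ≤ 2 * B.card := by
          have h1' : (bad.card : ℝ) ≤
              (((Finset.Ico a b).filter (fun j => g1 j ∈ B)).card : ℝ) +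
              (((Finset.Ico a b).filter (fun j => g2 j ∈ B)).card : ℝ) := by
            exact_mod_cast h1
          have h2' : (((Finset.Ico a b).filter (fun j => g1 j ∈ B)).card : ℝ) ≤ B.card := by
            exact_mod_cast h2
          have h3' : (((Finset.Ico a b).filter (fun j => g2 j ∈ B)).card : ℝ) ≤ B.card := by
            exact_mod_cast h3
          linarith
        linarith
      rw [Nat.card_Ico]
      exact_mod_cast this
    have hne : bad ≠ Finset.Ico a b := by
      intro he
      rw [he] at hb1
      exact lt_irrefl _ hb1
    have hss : bad ⊂ Finset.Ico a b :=
      Finset.ssubset_iff_subset_ne.mpr ⟨Finset.filter_subset _ _, hne⟩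
    obtain ⟨j, hj, hjb⟩ := Finset.exists_of_ssubset hss
    obtain ⟨hja, hjb'⟩ := Finset.mem_Ico.mp hj
    refine ⟨j, hja, hjb', ?_, ?_⟩
    · intro hmem
      exact hjb (Finset.mem_filter.mpr ⟨hj, Or.inl hmem⟩)
    · intro hmem
      exact hjb (Finset.mem_filter.mpr ⟨hj, Or.inr hmem⟩)
  have hB3 : (2 : ℝ) * B.card < (t : ℝ) := by
    have : (X : ℝ) = 98304 * t := by exact_mod_cast rfl
    rw [this] at hBcard
    have ht1 : (1 : ℝ) ≤ (t : ℝ) := by exact_mod_cast Nat.one_le_iff_ne_zero.mpr (by omega)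
    linarith only [hBcard, ht1]
  obtain ⟨j, hj1, hj2, hj3, hj4⟩ := hfind (3*t) (4*t)
    (fun j => 2 * (2*j+1)) (fun j => 4096 * (2*j+1))
    (by intro j1 j2 hq; omega) (by intro j1 j2 hq; omega)
    (by rw [show 4*t - 3*t = t by omega]; exact hB3)
  obtain ⟨i, hi1, hi2, hi3, hi4⟩ := hfind (8*t) (12*t)
    (fun i => (2*i+1)) (fun i => 1024 * (2*i+1))
    (by intro j1 j2 hq; omega) (by intro j1 j2 hq; omega)
    (by
      rw [show 12*t - 8*t = 4*t by omega]
      have : (t : ℝ) ≤ ((4*t : ℕ) : ℝ) := by push_cast; linarith [Nat.cast_nonneg (α := ℝ) t]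
      linarith)
  set m1 := 2*j+1 with hm1
  set m2 := 2*i+1 with hm2
  have hodd1 : Odd m1 := ⟨j, by omega⟩
  have hodd2 : Odd m2 := ⟨i, by omega⟩
  -- divisor counts
  have e1 : (((2 * m1).divisors.card : ℕ) : ℝ) = 2 * (m1.divisors.card : ℝ) := by
    have := d_two_pow_mul 1 m1 hodd1
    rw [show (2:ℕ)^1 = 2 by norm_num] at this
    rw [this]; push_cast; ring
  have e2 : (((4096 * m1).divisors.card : ℕ) : ℝ) = 13 * (m1.divisors.card : ℝ) := by
    have := d_two_pow_mul 12 m1 hodd1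
    rw [show (2:ℕ)^12 = 4096 by norm_num] at this
    rw [this]; push_cast; ring
  have e3 : (((1024 * m2).divisors.card : ℕ) : ℝ) = 11 * (m2.divisors.card : ℝ) := by
    have := d_two_pow_mul 10 m2 hodd2
    rw [show (2:ℕ)^10 = 1024 by norm_num] at this
    rw [this]; push_cast; ring
  have ha1 : (1 : ℝ) ≤ (m1.divisors.card : ℝ) := by
    have : 1 ∈ m1.divisors := Nat.one_mem_divisors.mpr (by omega)
    have : 1 ≤ m1.divisors.card := Finset.card_pos.mpr ⟨1, this⟩
    exact_mod_cast this
  -- goodness facts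
  have G1 := hgood (2 * m1) (by omega) (by omega) hj3
  have G2 := hgood (4096 * m1) (by omega) (by omega) hj4
  have G3 := hgood m2 (by omega) (by omega) hi3
  have G4 := hgood (1024 * m2) (by omega) (by omega) hi4
  rw [e1, abs_lt] at G1
  rw [e2, abs_lt] at G2
  rw [abs_lt] at G3
  rw [e3, abs_lt] at G4
  have M1 : f (2 * m1) ≤ f m2 := hmono (by omega)
  have M2 : f (1024 * m2) ≤ f (4096 * m1) := hmono (by omega)
  linarith [G1.1, G1.2, G2.1, G2.2, G3.1, G3.2, G4.1, G4.2]
end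

section
/- As x → ∞, ∑_{n≤x} φ(n) − (3/π²)x² = O(x log x). -/
open Filter Asymptotics

open ArithmeticFunction ArithmeticFunction.Moebius ArithmeticFunction.zeta Finset LSeries in
open scoped LSeries.notation in
private lemma my_hasSum_moebius :
    HasSum (fun n : ℕ => (μ n : ℝ) / (n:ℝ)^2) (6 / Real.pi^2) := by
  have hs : LSeriesSummable ↗μ 2 := ArithmeticFunction.LSeriesSummable_moebius_iff.mpr (by norm_num)
  have h : HasSum (LSeries.term ↗μ 2) (LSeries ↗μ 2) := hs.LSeriesHasSum
  have hL : LSeries ↗μ 2 = 6 / (Real.pi:ℂ)^2 := by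
    have h := LSeries_zeta_mul_Lseries_moebius (s := 2) (by norm_num)
    have hz : LSeries ↗ζ 2 = riemannZeta 2 := LSeries_zeta_eq_riemannZeta (by norm_num)
    rw [hz, riemannZeta_two] at h
    have hpi : ((Real.pi:ℂ))^2 ≠ 0 := by simpa using Real.pi_ne_zero
    field_simp at h ⊢
    linear_combination h
  rw [hL] at h
  rw [← Complex.hasSum_ofReal]
  convert h using 2 with n
  · rw [LSeries.term]
    rcases eq_or_ne n 0 with rfl|hn
    · simp
    · simp only [hn, if_false]
      rw [show (2:ℂ) = ((2:ℕ):ℂ) by norm_num, Complex.cpow_natCast]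
      push_cast
      norm_num
  · push_cast; ring

open ArithmeticFunction ArithmeticFunction.Moebius ArithmeticFunction.zeta Finset in
private lemma my_gauss_sum (m : ℕ) : ∑ q ∈ Finset.Icc 1 m, (q : ℝ) = m * (m + 1) / 2 := by
  induction m with
  | zero => simp
  | succ n ih =>
    rw [Finset.sum_Icc_succ_top (by omega)]
    push_cast
    rw [ih]; ring

open ArithmeticFunction ArithmeticFunction.Moebius ArithmeticFunction.zeta Finset in
private lemma my_totient_sum_eq (x : ℕ) :
    (∑ n ∈ Finset.Icc 1 x, (Nat.totient n : ℝ)) =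
    ∑ d ∈ Finset.Icc 1 x, (μ d : ℝ) * (∑ q ∈ Finset.Icc 1 (x / d), (q : ℝ)) := by
  have hinv : ∀ n > 0, ∑ p ∈ n.divisorsAntidiagonal,
      (μ p.1 : ℤ) • ((p.2 : ℝ)) = (Nat.totient n : ℝ) := by
    refine (sum_eq_iff_sum_smul_moebius_eq (f := fun n => (Nat.totient n : ℝ))
      (g := fun n => (n : ℝ))).mp ?_
    intro n hn
    exact_mod_cast congrArg (Nat.cast : ℕ → ℝ) (Nat.sum_totient n)
  calc ∑ n ∈ Finset.Icc 1 x, (Nat.totient n : ℝ)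
      = ∑ n ∈ Finset.Icc 1 x, ∑ p ∈ n.divisorsAntidiagonal, (μ p.1 : ℤ) • ((p.2 : ℝ)) := by
        refine Finset.sum_congr rfl fun n hn => ?_
        refine (hinv n ?_).symm
        simp only [Finset.mem_Icc] at hn; omega
    _ = ∑ d ∈ Finset.Icc 1 x, ∑ q ∈ Finset.Icc 1 (x / d), (μ d : ℤ) • ((q : ℝ)) := by
        rw [Finset.sum_sigma', Finset.sum_sigma']
        refine Finset.sum_nbij' (fun p => ⟨p.2.1, p.2.2⟩) (fun p => ⟨p.1 * p.2, (p.1, p.2)⟩)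
          ?_ ?_ ?_ ?_ ?_
        · rintro ⟨n, d, q⟩ h
          simp only [Finset.mem_sigma, Finset.mem_Icc, Nat.mem_divisorsAntidiagonal] at h ⊢
          obtain ⟨⟨h1, h2⟩, hdq, hn⟩ := h
          have hd : 0 < d := by rcases Nat.eq_zero_or_pos d with rfl|h; · simp at hdq; omega
                                · exact h
          have hq : 0 < q := by rcases Nat.eq_zero_or_pos q with rfl|h; · simp at hdq; omega
                                · exact h
          subst hdq
          exact ⟨⟨hd, le_trans (Nat.le_mul_of_pos_right d hq) h2⟩, hq,
            (Nat.le_div_iff_mul_le hd).mpr (by rw [mul_comm]; exact h2)⟩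
        · rintro ⟨d, q⟩ h
          simp only [Finset.mem_sigma, Finset.mem_Icc, Nat.mem_divisorsAntidiagonal] at h ⊢
          obtain ⟨⟨h1, h2⟩, h3, h4⟩ := h
          have hdq : d * q ≤ x := by
            have := (Nat.le_div_iff_mul_le (show 0 < d by omega)).mp h4
            calc d * q = q * d := by ring
              _ ≤ x := this
          have hpos : 0 < d * q := Nat.mul_pos (by omega) (by omega)
          exact ⟨⟨hpos, hdq⟩, trivial, by omega⟩
        · rintro ⟨n, d, q⟩ h
          simp only [Finset.mem_sigma, Nat.mem_divisorsAntidiagonal] at h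
          obtain ⟨_, hdq, _⟩ := h
          simp [hdq]
        · rintro ⟨d, q⟩ h; rfl
        · rintro ⟨n, d, q⟩ h; rfl
    _ = ∑ d ∈ Finset.Icc 1 x, (μ d : ℝ) * (∑ q ∈ Finset.Icc 1 (x / d), (q : ℝ)) := by
        refine Finset.sum_congr rfl fun d _ => ?_
        rw [Finset.mul_sum]
        refine Finset.sum_congr rfl fun q _ => ?_
        rw [zsmul_eq_mul]

open ArithmeticFunction ArithmeticFunction.Moebius ArithmeticFunction.zeta Finset in
private lemma my_tail_bound {x : ℕ} (hx : 1 ≤ x) :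
    |6 / Real.pi ^ 2 - ∑ d ∈ Finset.Icc 1 x, (μ d : ℝ) / (d:ℝ)^2| ≤ 1 / (x:ℝ) := by
  set f : ℕ → ℝ := fun n => (μ n : ℝ) / (n:ℝ)^2 with hf
  have hsum : Summable f := my_hasSum_moebius.summable
  have hIcc : ∑ d ∈ Finset.range (x+1), f d = ∑ d ∈ Finset.Icc 1 x, f d := by
    refine (Finset.sum_subset ?_ ?_).symm
    · intro d hd; simp only [Finset.mem_Icc, Finset.mem_range] at hd ⊢; omega
    · intro d hd hnd
      simp only [Finset.mem_Icc, Finset.mem_range] at hd hnd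
      have hd0 : d = 0 := by omega
      simp [hf, hd0]
  have key := Summable.sum_add_tsum_nat_add (f := f) (x+1) hsum
  rw [hIcc] at key
  have htsum : 6 / Real.pi ^ 2 - ∑ d ∈ Finset.Icc 1 x, f d = ∑' i, f (i + (x+1)) := by
    rw [← my_hasSum_moebius.tsum_eq, ← key]; ring
  show |6 / Real.pi ^ 2 - ∑ d ∈ Finset.Icc 1 x, f d| ≤ 1 / (x:ℝ)
  rw [htsum]
  have hg : Summable (fun i : ℕ => (((i + (x+1) : ℕ) : ℝ)^2)⁻¹) := by
    have := (Real.summable_one_div_nat_pow (p := 2)).mpr (by norm_num)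
    simpa only [one_div] using ((summable_nat_add_iff (x+1)).mpr this)
  have hbound : ∀ i : ℕ, |f (i + (x+1))| ≤ (((i + (x+1) : ℕ) : ℝ)^2)⁻¹ := by
    intro i
    have hn : 0 < i + (x+1) := by omega
    have hn2 : (0:ℝ) < ((i + (x+1) : ℕ) : ℝ)^2 := by
      exact pow_pos (by exact_mod_cast hn) 2
    have h1 : |((μ (i + (x+1)) : ℤ) : ℝ)| ≤ 1 := by
      have := abs_moebius_le_one (n := i + (x+1))
      calc |((μ (i + (x+1)) : ℤ) : ℝ)| = ((|μ (i + (x+1))| : ℤ) : ℝ) := by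
            rw [Int.cast_abs]
        _ ≤ 1 := by exact_mod_cast this
    have : |f (i + (x+1))| = |((μ (i + (x+1)) : ℤ) : ℝ)| / ((i + (x+1) : ℕ) : ℝ)^2 := by
      simp only [hf, abs_div, abs_of_nonneg hn2.le]
    rw [this, ← one_div]
    gcongr
  have habs : Summable (fun i => |f (i + (x+1))|) :=
    (hsum.comp_injective (add_left_injective (x+1))).abs
  calc |∑' i, f (i + (x+1))| ≤ ∑' i, |f (i + (x+1))| := by
        simpa [Real.norm_eq_abs] using
          norm_tsum_le_tsum_norm (f := fun i => f (i + (x+1)))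
            (by simpa [Real.norm_eq_abs] using habs)
    _ ≤ ∑' i, (((i + (x+1) : ℕ) : ℝ)^2)⁻¹ := Summable.tsum_le_tsum hbound habs hg
    _ ≤ 1 / (x:ℝ) := by
        refine Summable.tsum_le_of_sum_le hg ?_
        intro s
        obtain ⟨N, hN⟩ := s.exists_nat_subset_range
        calc ∑ i ∈ s, (((i + (x+1) : ℕ) : ℝ)^2)⁻¹
            ≤ ∑ i ∈ Finset.range N, (((i + (x+1) : ℕ) : ℝ)^2)⁻¹ :=
              Finset.sum_le_sum_of_subset_of_nonneg hN (fun i _ _ => by positivity)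
          _ = ∑ d ∈ Finset.Ioc x (x + N), ((d : ℝ)^2)⁻¹ := by
              rw [← Finset.Icc_add_one_left_eq_Ioc, ← Finset.Ico_add_one_right_eq_Icc, Finset.sum_Ico_eq_sum_range]
              refine Finset.sum_congr (by congr 1; omega) fun i _ => by push_cast; ring_nf
          _ ≤ (x : ℝ)⁻¹ - ((x + N : ℕ) : ℝ)⁻¹ :=
              sum_Ioc_inv_sq_le_sub (by omega) (by omega)
          _ ≤ 1 / (x:ℝ) := by
              rw [one_div]
              have : (0:ℝ) ≤ ((x + N : ℕ) : ℝ)⁻¹ := by positivity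
              linarith

open ArithmeticFunction ArithmeticFunction.Moebius ArithmeticFunction.zeta Finset in
private lemma my_term_bound {x d : ℕ} (h1 : 1 ≤ d) (h2 : d ≤ x) :
    |((x/d : ℕ) : ℝ) * (((x/d : ℕ) : ℝ) + 1) / 2 - (x:ℝ)^2 / (2 * (d:ℝ)^2)| ≤ (x:ℝ)/d := by
  have hd : (0:ℝ) < d := by exact_mod_cast h1
  set m : ℕ := x / d with hm
  have hm1 : 1 ≤ m := (Nat.one_le_div_iff (by omega)).mpr h2
  have hml : (m : ℝ) ≤ (x:ℝ)/d := by
    rw [le_div_iff₀ hd]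
    exact_mod_cast Nat.div_mul_le_self x d
  have hmu : (x:ℝ)/d < (m:ℝ) + 1 := by
    rw [div_lt_iff₀ hd]
    exact_mod_cast (Nat.div_lt_iff_lt_mul (show 0 < d by omega)).mp (Nat.lt_succ_self m)
  have hmr : (1:ℝ) ≤ (m:ℝ) := by exact_mod_cast hm1
  have hr1 : (1:ℝ) ≤ (x:ℝ)/d := le_trans hmr hml
  have hx2 : (x:ℝ)^2 / (2*(d:ℝ)^2) = ((x:ℝ)/d)^2/2 := by rw [div_pow]; ring
  rw [hx2, abs_le]
  set r : ℝ := (x:ℝ)/d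
  constructor
  · nlinarith [sq_nonneg (r - m)]
  · nlinarith [sq_nonneg (r - m)]

open ArithmeticFunction ArithmeticFunction.Moebius ArithmeticFunction.zeta Finset in
theorem totient_sum_explicit :
    (fun x : ℕ => (∑ n ∈ Finset.Icc 1 x, (Nat.totient n : ℝ)) -
        (3 / Real.pi ^ 2) * (x : ℝ) ^ 2)
      =O[atTop] fun x : ℕ => (x : ℝ) * Real.log x := by
  refine IsBigO.of_bound (5/2) ?_
  filter_upwards [eventually_ge_atTop 3] with x hx
  have hx1 : 1 ≤ x := by omega
  have hxR : (3:ℝ) ≤ (x:ℝ) := by exact_mod_cast hx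
  have hxpos : (0:ℝ) < x := by linarith
  have hlog : (1:ℝ) ≤ Real.log x := by
    rw [show (1:ℝ) = Real.log (Real.exp 1) by simp]
    apply Real.log_le_log (Real.exp_pos 1)
    calc Real.exp 1 ≤ 3 := by
          have := Real.exp_one_lt_d9
          linarith
      _ ≤ (x:ℝ) := hxR
  set c : ℝ := ∑ d ∈ Finset.Icc 1 x, (μ d : ℝ) / (d:ℝ)^2 with hc
  -- main algebraic split
  have hsplit : (∑ n ∈ Finset.Icc 1 x, (Nat.totient n : ℝ)) - (3 / Real.pi ^ 2) * (x:ℝ)^2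
      = (∑ d ∈ Finset.Icc 1 x, (μ d : ℝ) *
          (((x/d : ℕ) : ℝ) * (((x/d : ℕ) : ℝ) + 1) / 2 - (x:ℝ)^2 / (2 * (d:ℝ)^2)))
        + (x:ℝ)^2/2 * (c - 6 / Real.pi ^ 2) := by
    rw [my_totient_sum_eq x]
    have h1 : ∀ d ∈ Finset.Icc 1 x, (μ d : ℝ) * (∑ q ∈ Finset.Icc 1 (x / d), (q : ℝ))
        = (μ d : ℝ) * (((x/d : ℕ) : ℝ) * (((x/d : ℕ) : ℝ) + 1) / 2) := by
      intro d _
      rw [my_gauss_sum]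
    rw [Finset.sum_congr rfl h1]
    have h2 : ∑ d ∈ Finset.Icc 1 x, (μ d : ℝ) *
          (((x/d : ℕ) : ℝ) * (((x/d : ℕ) : ℝ) + 1) / 2 - (x:ℝ)^2 / (2 * (d:ℝ)^2))
        = ∑ d ∈ Finset.Icc 1 x, ((μ d : ℝ) * (((x/d : ℕ) : ℝ) * (((x/d : ℕ) : ℝ) + 1) / 2)
            - (x:ℝ)^2/2 * ((μ d : ℝ) / (d:ℝ)^2)) := by
      refine Finset.sum_congr rfl fun d _ => ?_
      ring
    rw [h2, Finset.sum_sub_distrib, ← Finset.mul_sum, ← hc]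
    ring
  rw [hsplit]
  -- bound the first sum
  have hbd1 : |∑ d ∈ Finset.Icc 1 x, (μ d : ℝ) *
        (((x/d : ℕ) : ℝ) * (((x/d : ℕ) : ℝ) + 1) / 2 - (x:ℝ)^2 / (2 * (d:ℝ)^2))|
      ≤ (x:ℝ) * (1 + Real.log x) := by
    calc |∑ d ∈ Finset.Icc 1 x, (μ d : ℝ) *
          (((x/d : ℕ) : ℝ) * (((x/d : ℕ) : ℝ) + 1) / 2 - (x:ℝ)^2 / (2 * (d:ℝ)^2))|
        ≤ ∑ d ∈ Finset.Icc 1 x, |(μ d : ℝ) *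
          (((x/d : ℕ) : ℝ) * (((x/d : ℕ) : ℝ) + 1) / 2 - (x:ℝ)^2 / (2 * (d:ℝ)^2))| :=
          Finset.abs_sum_le_sum_abs _ _
      _ ≤ ∑ d ∈ Finset.Icc 1 x, (x:ℝ)/d := by
          refine Finset.sum_le_sum fun d hd => ?_
          simp only [Finset.mem_Icc] at hd
          rw [abs_mul]
          have hmu : |(μ d : ℝ)| ≤ 1 := by
            have := abs_moebius_le_one (n := d)
            calc |((μ d : ℤ) : ℝ)| = ((|μ d| : ℤ) : ℝ) := by rw [Int.cast_abs]
              _ ≤ 1 := by exact_mod_cast this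
          calc |(μ d : ℝ)| * |((x/d : ℕ) : ℝ) * (((x/d : ℕ) : ℝ) + 1) / 2 - (x:ℝ)^2 / (2 * (d:ℝ)^2)|
              ≤ 1 * ((x:ℝ)/d) := by
                apply mul_le_mul hmu (my_term_bound hd.1 hd.2) (abs_nonneg _) zero_le_one
            _ = (x:ℝ)/d := one_mul _
      _ = (x:ℝ) * ∑ d ∈ Finset.Icc 1 x, ((d:ℝ))⁻¹ := by
          rw [Finset.mul_sum]
          exact Finset.sum_congr rfl fun d _ => div_eq_mul_inv _ _
      _ ≤ (x:ℝ) * (1 + Real.log x) := by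
          have hh : (harmonic x : ℝ) = ∑ d ∈ Finset.Icc 1 x, ((d:ℝ))⁻¹ := by
            rw [harmonic_eq_sum_Icc]; push_cast; rfl
          have := harmonic_le_one_add_log x
          rw [← hh]
          have hhr : (harmonic x : ℝ) ≤ 1 + Real.log x := this
          exact mul_le_mul_of_nonneg_left hhr hxpos.le
  -- bound the second term
  have hbd2 : |(x:ℝ)^2/2 * (c - 6 / Real.pi ^ 2)| ≤ (x:ℝ)/2 := by
    rw [abs_mul, abs_of_nonneg (by positivity : (0:ℝ) ≤ (x:ℝ)^2/2)]
    have h := my_tail_bound hx1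
    rw [abs_sub_comm] at h
    calc (x:ℝ)^2/2 * |c - 6 / Real.pi ^ 2| ≤ (x:ℝ)^2/2 * (1/(x:ℝ)) := by
          apply mul_le_mul_of_nonneg_left h (by positivity)
      _ = (x:ℝ)/2 := by field_simp
  -- combine
  have habs : |(∑ d ∈ Finset.Icc 1 x, (μ d : ℝ) *
        (((x/d : ℕ) : ℝ) * (((x/d : ℕ) : ℝ) + 1) / 2 - (x:ℝ)^2 / (2 * (d:ℝ)^2)))
      + (x:ℝ)^2/2 * (c - 6 / Real.pi ^ 2)| ≤ (x:ℝ) * (1 + Real.log x) + (x:ℝ)/2 :=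
    le_trans (abs_add_le _ _) (add_le_add hbd1 hbd2)
  rw [Real.norm_eq_abs, Real.norm_eq_abs]
  have hxa : |(x:ℝ) * Real.log x| = (x:ℝ) * Real.log x :=
    abs_of_nonneg (by positivity)
  rw [hxa]
  calc |(∑ d ∈ Finset.Icc 1 x, (μ d : ℝ) *
        (((x/d : ℕ) : ℝ) * (((x/d : ℕ) : ℝ) + 1) / 2 - (x:ℝ)^2 / (2 * (d:ℝ)^2)))
      + (x:ℝ)^2/2 * (c - 6 / Real.pi ^ 2)| ≤ (x:ℝ) * (1 + Real.log x) + (x:ℝ)/2 := habs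
    _ ≤ 5/2 * ((x:ℝ) * Real.log x) := by nlinarith
end
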